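/- Let Ω and Λ be LF-inducing sets with Λ ⊆ Ω. (1) If the two-sided Mahavier dynamical system (I_{F_Λ}, σ_{F_Λ}) is topologically transitive, then (I_{F_Ω}, σ_{F_Ω}) is topologically transitive. (2) If (I_{F_Λ}, σ_{F_Λ}) is topologically mixing, then (I_{F_Ω}, σ_{F_Ω}) is topologically mixing. -/

import Mathlib

open Set Filter Topology

/-- One-sided Mahavier product of a relation `F` on `X`. -/
def MahavierPlus {X : Type*} (F : Set (X × X)) : Set (ℕ → X) :=
  {x | ∀ n : ℕ, (x n, x (n + 1)) ∈ F}

/-- Two-sided Mahavier product of a relation `F` on `X`. -/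
def MahavierTwo {X : Type*} (F : Set (X × X)) : Set (ℤ → X) :=
  {x | ∀ n : ℤ, (x n, x (n + 1)) ∈ F}

/-- The shift map on the one-sided Mahavier product. -/
def shiftPlus {X : Type*} (F : Set (X × X)) (x : MahavierPlus F) : MahavierPlus F :=
  ⟨fun n => (x : ℕ → X) (n + 1), fun n => x.2 (n + 1)⟩

/-- The shift map on the two-sided Mahavier product. -/
def shiftTwo {X : Type*} (F : Set (X × X)) (x : MahavierTwo F) : MahavierTwo F :=
  ⟨fun n => (x : ℤ → X) (n + 1), fun n => x.2 (n + 1)⟩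

/-- The metric `D(x,y) = sup_{n ≥ 1} d(x_n, y_n)/2^n` on one-sided sequences
(coordinates are indexed from `0` here, so the weight is `2^(n+1)`). -/
noncomputable def DPlus {X : Type*} [PseudoMetricSpace X] (x y : ℕ → X) : ℝ :=
  ⨆ n : ℕ, dist (x n) (y n) / 2 ^ (n + 1)

/-- The metric `D(x,y) = sup_{n ∈ ℤ} d(x_n, y_n)/2^{|n|}` on two-sided sequences. -/
noncomputable def DTwo {X : Type*} [PseudoMetricSpace X] (x y : ℤ → X) : ℝ :=
  ⨆ n : ℤ, dist (x n) (y n) / 2 ^ n.natAbs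

/-- Topological transitivity. -/
def TopTransitive {Y : Type*} [TopologicalSpace Y] (f : Y → Y) : Prop :=
  ∀ U V : Set Y, IsOpen U → IsOpen V → U.Nonempty → V.Nonempty →
    ∃ n : ℕ, (f^[n] '' U ∩ V).Nonempty

/-- Topological mixing. -/
def TopMixing {Y : Type*} [TopologicalSpace Y] (f : Y → Y) : Prop :=
  ∀ U V : Set Y, IsOpen U → IsOpen V → U.Nonempty → V.Nonempty →
    ∃ n₀ : ℕ, ∀ n : ℕ, n₀ ≤ n → (f^[n] '' U ∩ V).Nonempty

/-- The shadowing property for a map `f` with respect to a distance `dY`. -/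
def ShadowingProp {Y : Type*} (dY : Y → Y → ℝ) (f : Y → Y) : Prop :=
  ∀ ε : ℝ, 0 < ε → ∃ δ : ℝ, 0 < δ ∧ ∀ x : ℕ → Y,
    (∀ k : ℕ, dY (f (x k)) (x (k + 1)) < δ) →
    ∃ y : Y, ∀ k : ℕ, dY (f^[k] y) (x k) < ε

/-- The specification property for a map `f` with respect to a distance `dY`. -/
def SpecProp {Y : Type*} (dY : Y → Y → ℝ) (f : Y → Y) : Prop :=
  ∀ ε : ℝ, 0 < ε → ∃ N : ℕ, 0 < N ∧ ∀ n : ℕ, 0 < n →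
    ∀ x : Fin n → Y, ∀ k l : Fin n → ℕ,
      (∀ i, k i ≤ l i) →
      (∀ i j : Fin n, (i : ℕ) + 1 = (j : ℕ) → l i + N ≤ k j) →
      ∃ y : Y, ∀ i : Fin n, ∀ m : ℕ, k i ≤ m → m ≤ l i →
        dY (f^[m] y) (f^[m] (x i)) ≤ ε

/-- The CR-specification property for the one-sided Mahavier product of `F`. -/
def CRSpec {X : Type*} [PseudoMetricSpace X] (F : Set (X × X)) : Prop :=
  ∀ ε : ℝ, 0 < ε → ∃ N : ℕ, 0 < N ∧ ∀ n : ℕ, 0 < n →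
    ∀ x : Fin n → MahavierPlus F, ∀ k l : Fin n → ℕ,
      (∀ i, k i ≤ l i) →
      (∀ i j : Fin n, (i : ℕ) + 1 = (j : ℕ) → l i + N ≤ k j) →
      ∃ y : MahavierPlus F, ∀ i : Fin n, ∀ m : ℕ, k i ≤ m → m ≤ l i →
        dist ((x i : ℕ → X) m) ((y : ℕ → X) m) ≤ ε

/-- The image of a set under a relation. -/
def relImage {X : Type*} (F : Set (X × X)) (A : Set X) : Set X :=
  {y | ∃ a ∈ A, (a, y) ∈ F}

/-- Composition of relations. -/
def relComp {X : Type*} (F G : Set (X × X)) : Set (X × X) :=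
  {p | ∃ z : X, (p.1, z) ∈ F ∧ (z, p.2) ∈ G}

/-- Iterated composition `F^n` of a relation with itself. -/
def relPow {X : Type*} (F : Set (X × X)) : ℕ → Set (X × X)
  | 0 => {p | p.1 = p.2}
  | n + 1 => relComp (relPow F n) F

/-- A finite set `Ω` of positive reals is LF-inducing if it has at least two elements,
all its elements are positive, and it contains elements `ω₁ < 1 < ω₂` that never
connect: `ω₁^k = ω₂^l` (for integers `k, l`) only when `k = l = 0`. -/
def LFInducing (Ω : Finset ℝ) : Prop :=
  2 ≤ Ω.card ∧ (∀ ω ∈ Ω, 0 < ω) ∧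
  ∃ ω₁ ∈ Ω, ∃ ω₂ ∈ Ω, ω₁ < 1 ∧ 1 < ω₂ ∧
    ∀ k l : ℤ, ω₁ ^ k = ω₂ ^ l → k = 0 ∧ l = 0

/-- The relation `F_Ω = {(x,y) ∈ [0,1]² : y = ω·x for some ω ∈ Ω}`. -/
def FOmega (Ω : Finset ℝ) : Set (ℝ × ℝ) :=
  {p | p.1 ∈ Set.Icc (0 : ℝ) 1 ∧ p.2 ∈ Set.Icc (0 : ℝ) 1 ∧ ∃ ω ∈ Ω, p.2 = ω * p.1}


section Infra
open Set

variable {S : Finset ℝ}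

lemma FOmega_mono {Λ Ω : Finset ℝ} (h : Λ ⊆ Ω) : FOmega Λ ⊆ FOmega Ω := by
  rintro ⟨p, q⟩ ⟨h1, h2, ω, hω, he⟩
  exact ⟨h1, h2, ω, h hω, he⟩

lemma MahavierTwo_mono {Λ Ω : Finset ℝ} (h : Λ ⊆ Ω) :
    MahavierTwo (FOmega Λ) ⊆ MahavierTwo (FOmega Ω) :=
  fun _ hx n => FOmega_mono h (hx n)

lemma mem_Icc_of_mem {x : ℤ → ℝ} (hx : x ∈ MahavierTwo (FOmega S)) (n : ℤ) :
    x n ∈ Set.Icc (0:ℝ) 1 := (hx n).1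

/-- scaling a Mahavier sequence by `t ∈ [0,1]` -/
lemma scale_mem {x : ℤ → ℝ} (hx : x ∈ MahavierTwo (FOmega S)) {t : ℝ}
    (ht0 : 0 ≤ t) (ht1 : t ≤ 1) : (fun m => t * x m) ∈ MahavierTwo (FOmega S) := by
  intro n
  obtain ⟨⟨h0, h1⟩, ⟨h0', h1'⟩, ω, hω, he⟩ := hx n
  simp only at h0 h1 h0' h1' he ⊢
  refine ⟨⟨by positivity, ?_⟩, ⟨by positivity, ?_⟩, ω, hω, by rw [he]; ring⟩
  · calc t * x n ≤ 1 * x n := by nlinarith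
    _ ≤ 1 := by linarith
  · calc t * x (n+1) ≤ 1 * x (n+1) := by nlinarith
    _ ≤ 1 := by linarith

/-- shifting a Mahavier sequence -/
lemma shift_mem {x : ℤ → ℝ} (hx : x ∈ MahavierTwo (FOmega S)) (d : ℤ) :
    (fun m => x (m + d)) ∈ MahavierTwo (FOmega S) := by
  intro n
  have := hx (n + d)
  simpa [add_right_comm n d 1] using this

/-- gluing two Mahavier sequences that agree at `j` -/
def glue (x y : ℤ → ℝ) (j : ℤ) : ℤ → ℝ := fun m => if m ≤ j then x m else y m

lemma glue_left {x y : ℤ → ℝ} {j m : ℤ} (h : m ≤ j) : glue x y j m = x m := if_pos h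

lemma glue_right {x y : ℤ → ℝ} {j : ℤ} (he : x j = y j) {m : ℤ} (h : j ≤ m) :
    glue x y j m = y m := by
  unfold glue
  rcases lt_or_eq_of_le h with h' | h'
  · rw [if_neg (by omega)]
  · subst h'; rw [if_pos le_rfl, he]

lemma glue_mem {x y : ℤ → ℝ} (hx : x ∈ MahavierTwo (FOmega S))
    (hy : y ∈ MahavierTwo (FOmega S)) {j : ℤ} (he : x j = y j) :
    glue x y j ∈ MahavierTwo (FOmega S) := by
  intro n
  rcases le_or_gt (n + 1) j with h | h
  · rw [glue_left h, glue_left (by omega)]; exact hx n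
  · have hn : j ≤ n := by omega
    rw [glue_right he hn, glue_right he (by omega)]; exact hy n

end Infra

section Infra2
open Set

variable {S : Finset ℝ}

/-- the "tent" sequence with peak value `s` at position `j`:
climbs by `ω₂` to the left of `j`, decays by `ω₁` to the right. -/
noncomputable def tent (ω₁ ω₂ s : ℝ) (j : ℤ) : ℤ → ℝ :=
  fun m => if m ≤ j then s * ω₂ ^ (m - j) else s * ω₁ ^ (m - j)

lemma tent_peak (ω₁ ω₂ s : ℝ) (j : ℤ) : tent ω₁ ω₂ s j j = s := by
  simp [tent]

lemma tent_le {ω₁ ω₂ s : ℝ} (h1 : 0 < ω₁) (h1' : ω₁ < 1) (h2 : 1 < ω₂)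
    (hs : 0 < s) (j m : ℤ) : 0 < tent ω₁ ω₂ s j m ∧ tent ω₁ ω₂ s j m ≤ s := by
  unfold tent
  split_ifs with h
  · have hp : (0:ℝ) < ω₂ ^ (m - j) := zpow_pos (by linarith) _
    have hle : ω₂ ^ (m - j) ≤ 1 := zpow_le_one_of_nonpos₀ (by linarith) (by omega)
    constructor
    · positivity
    · nlinarith
  · have hp : (0:ℝ) < ω₁ ^ (m - j) := zpow_pos h1 _
    have hle : ω₁ ^ (m - j) ≤ 1 := by
      apply zpow_le_one₀ h1 h1'.le (by omega)
    constructor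
    · positivity
    · nlinarith

lemma tent_mem {ω₁ ω₂ s : ℝ} (hω₁ : ω₁ ∈ S) (hω₂ : ω₂ ∈ S)
    (h1 : 0 < ω₁) (h1' : ω₁ < 1) (h2 : 1 < ω₂)
    (hs : 0 < s) (hs1 : s ≤ 1) (j : ℤ) : tent ω₁ ω₂ s j ∈ MahavierTwo (FOmega S) := by
  intro n
  have B := fun m => tent_le h1 h1' h2 hs j m
  refine ⟨⟨(B n).1.le, le_trans (B n).2 hs1⟩, ⟨(B (n+1)).1.le, le_trans (B (n+1)).2 hs1⟩, ?_⟩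
  rcases le_or_gt (n + 1) j with h | h
  · refine ⟨ω₂, hω₂, ?_⟩
    rw [show tent ω₁ ω₂ s j n = s * ω₂ ^ (n - j) from if_pos (by omega),
        show tent ω₁ ω₂ s j (n+1) = s * ω₂ ^ (n + 1 - j) from if_pos h,
        show n + 1 - j = (n - j) + 1 by ring, zpow_add_one₀ (by linarith)]
    ring
  · refine ⟨ω₁, hω₁, ?_⟩
    have hn : j ≤ n := by omega
    have hform : tent ω₁ ω₂ s j n = s * ω₁ ^ (n - j) := by
      unfold tent
      rcases lt_or_eq_of_le hn with h' | h'
      · rw [if_neg (by omega)]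
      · subst h'; simp
    rw [hform, show tent ω₁ ω₂ s j (n+1) = s * ω₁ ^ (n + 1 - j) from if_neg (by omega),
        show n + 1 - j = (n - j) + 1 by ring, zpow_add_one₀ (by linarith)]
    ring

/-- positivity propagates through a Mahavier sequence (all ω ∈ S positive). -/
lemma pos_propagate {x : ℤ → ℝ} (hx : x ∈ MahavierTwo (FOmega S))
    (hpos : ∀ ω ∈ S, (0:ℝ) < ω) {n₀ : ℤ} (h : 0 < x n₀) : ∀ m, 0 < x m := by
  have step : ∀ n : ℤ, 0 < x n ↔ 0 < x (n + 1) := by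
    intro n
    obtain ⟨⟨h0, _⟩, ⟨h0', _⟩, ω, hω, he⟩ := hx n
    simp only at h0 h0' he
    have hωp := hpos ω hω
    constructor
    · intro hp; rw [he]; positivity
    · intro hp
      rcases h0.lt_or_eq with h' | h'
      · exact h'
      · exfalso; rw [he, ← h'] at hp; simp at hp
  intro m
  have key : ∀ d : ℤ, 0 < x (n₀ + d) := by
    intro d
    induction d using Int.induction_on with
    | zero => simpa using h
    | succ k ih => rw [show n₀ + (k + 1 : ℤ) = (n₀ + k) + 1 by ring, ← step]; exact ih
    | pred k ih => rw [step, show n₀ + (-k - 1 : ℤ) + 1 = n₀ + (-k) by ring]; exact ih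
  have := key (m - n₀)
  simpa using this

/-- coordinates of iterates of the shift -/
lemma iterate_shiftTwo_coe {F : Set (ℝ × ℝ)} (x : MahavierTwo F) (n : ℕ) (m : ℤ) :
    ((shiftTwo F)^[n] x : ℤ → ℝ) m = (x : ℤ → ℝ) (m + n) := by
  induction n generalizing x with
  | zero => simp
  | succ k ih =>
    rw [Function.iterate_succ_apply, ih]
    show (x : ℤ → ℝ) (m + k + 1) = (x : ℤ → ℝ) (m + (k+1))
    ring_nf

end Infra2

section Infra3
open Set

/-- evaluation of a coordinate is continuous on the subtype -/
lemma continuous_evalM (F : Set (ℝ × ℝ)) (j : ℤ) :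
    Continuous (fun y : MahavierTwo F => (y : ℤ → ℝ) j) :=
  (continuous_apply j).comp continuous_subtype_val

lemma isOpen_coordIoo (F : Set (ℝ × ℝ)) (j : ℤ) (a b : ℝ) :
    IsOpen {y : MahavierTwo F | (y : ℤ → ℝ) j ∈ Set.Ioo a b} :=
  (isOpen_Ioo).preimage (continuous_evalM F j)

/-- every point of an open set in the Mahavier space admits a cylinder neighborhood -/
lemma exists_cylinder {F : Set (ℝ × ℝ)} {U : Set (MahavierTwo F)} (hU : IsOpen U)
    {x : MahavierTwo F} (hx : x ∈ U) :
    ∃ (N : ℕ) (δ : ℝ), 0 < δ ∧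
      ∀ y : MahavierTwo F, (∀ i : ℤ, i.natAbs ≤ N → |(y : ℤ → ℝ) i - (x : ℤ → ℝ) i| < δ) →
        y ∈ U := by
  classical
  obtain ⟨O, hO, hOU⟩ := isOpen_induced_iff.mp hU
  have hxO : (x : ℤ → ℝ) ∈ O := by rw [← hOU] at hx; exact hx
  obtain ⟨I, u, hu, hsub⟩ := isOpen_pi_iff.mp hO _ hxO
  have hballs : ∀ i ∈ I, ∃ δ > 0, Metric.ball ((x : ℤ → ℝ) i) δ ⊆ u i := by
    intro i hi
    exact Metric.isOpen_iff.mp (hu i hi).1 _ (hu i hi).2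
  choose! δf hδf hδsub using hballs
  set D : Finset ℝ := insert 1 (I.image δf) with hD
  have hDne : D.Nonempty := Finset.insert_nonempty _ _
  refine ⟨I.sup (fun i => i.natAbs), D.min' hDne, ?_, ?_⟩
  · have hmem := Finset.mem_insert.mp (D.min'_mem hDne)
    rcases hmem with h | h
    · rw [h]; norm_num
    · obtain ⟨i, hi, hie⟩ := Finset.mem_image.mp h
      rw [← hie]; exact hδf i hi
  · intro y hy
    rw [← hOU]
    apply hsub
    intro i hi
    apply hδsub i hi
    rw [Metric.mem_ball, Real.dist_eq]
    have h1 : |(y : ℤ → ℝ) i - (x : ℤ → ℝ) i| < D.min' hDne :=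
      hy i (Finset.le_sup hi)
    have h2 : D.min' hDne ≤ δf i :=
      Finset.min'_le _ _ (Finset.mem_insert_of_mem (Finset.mem_image_of_mem _ hi))
    linarith
end Infra3

section Density
open Set

variable {α β : ℝ}

/-- pigeonhole: some nonzero `Kα + Lβ` with `K ≥ 1`, `L ≥ 0` has small absolute value -/
lemma exists_small_combo (hα : α < 0) (hβ : 0 < β)
    (hirr : ∀ k l : ℤ, (k:ℝ) * α + l * β = 0 → k = 0 ∧ l = 0) {ε : ℝ} (hε : 0 < ε) :
    ∃ (K : ℕ) (L : ℕ), 1 ≤ K ∧ |(K:ℝ) * α + L * β| < ε ∧ (K:ℝ) * α + L * β ≠ 0 := by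
  classical
  obtain ⟨n, hn⟩ := exists_nat_gt (β / ε)
  have hn0 : 0 < (n:ℝ) := lt_trans (by positivity) hn
  have hβn : β / n < ε := by
    have h' : β < (n:ℝ) * ε := by
      rw [div_lt_iff₀ hε] at hn
      nlinarith
    rw [div_lt_iff₀ hn0]
    nlinarith
  set f : ℕ → ℝ := fun k => Int.fract ((k * α) / β) with hf
  have hf01 : ∀ k, 0 ≤ f k ∧ f k < 1 := fun k => ⟨Int.fract_nonneg _, Int.fract_lt_one _⟩
  have hmaps : ∀ k ∈ Finset.range (n+1), (⌊f k * n⌋ : ℤ) ∈ Finset.Ico (0:ℤ) n := by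
    intro k _
    rw [Finset.mem_Ico]
    refine ⟨Int.floor_nonneg.mpr (mul_nonneg (hf01 k).1 hn0.le), ?_⟩
    rw [Int.floor_lt]
    push_cast
    nlinarith [(hf01 k).2, (hf01 k).1]
  have hcard : (Finset.Ico (0:ℤ) n).card < (Finset.range (n+1)).card := by
    rw [Finset.card_range, Int.card_Ico]
    simp
  obtain ⟨k₁, hk₁, k₂, hk₂, hne, heq⟩ :=
    Finset.exists_ne_map_eq_of_card_lt_of_maps_to hcard hmaps
  wlog hlt : k₁ < k₂ generalizing k₁ k₂
  · exact this k₂ hk₂ k₁ hk₁ hne.symm heq.symm (by omega)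
  have hfd : |f k₂ - f k₁| < 1 / n := by
    have h1 := Int.floor_le (f k₁ * n)
    have h2 := Int.lt_floor_add_one (f k₁ * n)
    have h3 := Int.floor_le (f k₂ * n)
    have h4 := Int.lt_floor_add_one (f k₂ * n)
    rw [heq] at h1 h2
    have hinv : (1/(n:ℝ)) * n = 1 := by field_simp
    rw [abs_lt]
    constructor
    · nlinarith
    · nlinarith
  set L₁ : ℤ := ⌊((k₁:ℝ) * α)/β⌋ with hL₁
  set L₂ : ℤ := ⌊((k₂:ℝ) * α)/β⌋ with hL₂
  have hrk : ∀ k : ℕ, β * f k = (k:ℝ) * α - β * ⌊((k:ℝ) * α)/β⌋ := by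
    intro k
    rw [hf]
    simp only [Int.fract]
    field_simp
  have hkk : (k₁:ℝ) ≤ (k₂:ℝ) := by exact_mod_cast hlt.le
  have hLle : L₂ ≤ L₁ := by
    apply Int.floor_le_floor
    rw [div_le_div_iff_of_pos_right hβ]
    nlinarith
  have hLt : (((L₁ - L₂).toNat : ℤ) : ℝ) = (L₁ : ℝ) - (L₂ : ℝ) := by
    rw [Int.toNat_of_nonneg (by omega : (0:ℤ) ≤ L₁ - L₂)]
    push_cast
    ring
  have hd : β * f k₂ - β * f k₁ = ((k₂ - k₁ : ℕ) : ℝ) * α + ((L₁ - L₂).toNat : ℝ) * β := by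
    rw [hrk, hrk]
    have h2 : (((L₁ - L₂).toNat : ℕ) : ℝ) = (L₁ : ℝ) - (L₂ : ℝ) := by exact_mod_cast hLt
    rw [h2, ← hL₁, ← hL₂]
    push_cast [Nat.cast_sub hlt.le]
    ring
  refine ⟨k₂ - k₁, (L₁ - L₂).toNat, by omega, ?_, ?_⟩
  · rw [← hd]
    calc |β * f k₂ - β * f k₁| = β * |f k₂ - f k₁| := by
          rw [← mul_sub, abs_mul, abs_of_pos hβ]
    _ < β * (1/n) := by
          apply mul_lt_mul_of_pos_left hfd hβ
    _ = β / n := by ring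
    _ < ε := hβn
  · intro h0
    have := hirr (k₂ - k₁ : ℕ) ((L₁ - L₂).toNat) (by push_cast at h0 ⊢; linarith [h0])
    omega

/-- a small *negative* combination with natural coefficients -/
lemma exists_small_neg (hα : α < 0) (hβ : 0 < β)
    (hirr : ∀ k l : ℤ, (k:ℝ) * α + l * β = 0 → k = 0 ∧ l = 0) {ε : ℝ} (hε : 0 < ε) :
    ∃ (k l : ℕ), -ε < (k:ℝ) * α + l * β ∧ (k:ℝ) * α + l * β < 0 := by
  classical
  obtain ⟨K, L, hK1, habs, hne0⟩ := exists_small_combo hα hβ hirr hε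
  set d : ℝ := (K:ℝ) * α + L * β with hdd
  rcases hne0.lt_or_gt with hneg | hpos
  · exact ⟨K, L, by rw [abs_lt] at habs; exact habs.1, hneg⟩
  · -- step from α upward by d until just below 0
    have hdε : d < ε := by rw [abs_lt] at habs; exact habs.2
    have hex : ∃ m : ℕ, 0 < α + m * d := by
      obtain ⟨m, hm⟩ := exists_nat_gt ((-α) / d)
      refine ⟨m, ?_⟩
      rw [div_lt_iff₀ hpos] at hm
      linarith
    set m₀ := Nat.find hex with hm₀
    have hm₀pos : 1 ≤ m₀ := by
      rcases Nat.eq_zero_or_pos m₀ with h | h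
      · exfalso
        have := Nat.find_spec hex
        rw [← hm₀, h] at this
        push_cast at this
        linarith
      · exact h
    have hjneg : ¬ (0 < α + (m₀ - 1 : ℕ) * d) := Nat.find_min hex (by omega)
    have hspec : 0 < α + m₀ * d := Nat.find_spec hex
    push_neg at hjneg
    have hval : α + (m₀ - 1 : ℕ) * d = α + m₀ * d - d := by
      have : ((m₀ - 1 : ℕ) : ℝ) = (m₀ : ℝ) - 1 := by
        push_cast [Nat.cast_sub hm₀pos]
        ring
      rw [this]; ring
    have hlow : -ε < α + (m₀ - 1 : ℕ) * d := by
      rw [hval]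
      linarith
    have hrepr : ((1 + (m₀ - 1) * K : ℕ) : ℝ) * α + ((m₀ - 1) * L : ℕ) * β
        = α + ((m₀ - 1 : ℕ) : ℝ) * d := by
      rw [hdd]
      push_cast
      ring
    have hne : α + ((m₀ - 1 : ℕ) : ℝ) * d ≠ 0 := by
      intro h0
      have hcomb : ((1 + (m₀ - 1) * K : ℕ) : ℝ) * α + ((m₀ - 1) * L : ℕ) * β = 0 := by
        rw [hrepr]; exact h0
      have := hirr (1 + (m₀ - 1) * K : ℕ) ((m₀ - 1) * L : ℕ) (by exact_mod_cast hcomb)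
      omega
    refine ⟨1 + (m₀ - 1) * K, (m₀ - 1) * L, ?_, ?_⟩
    · rw [hrepr]; exact hlow
    · rw [hrepr]; exact lt_of_le_of_ne hjneg hne

/-- density: natural combinations hit every interval `(c - ε, c]` -/
lemma combo_dense (hα : α < 0) (hβ : 0 < β)
    (hirr : ∀ k l : ℤ, (k:ℝ) * α + l * β = 0 → k = 0 ∧ l = 0) (c : ℝ) {ε : ℝ} (hε : 0 < ε) :
    ∃ (k l : ℕ), c - ε < (k:ℝ) * α + l * β ∧ (k:ℝ) * α + l * β ≤ c := by
  classical
  obtain ⟨k₀, l₀, hγlow, hγneg⟩ := exists_small_neg hα hβ hirr hε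
  set γ : ℝ := (k₀:ℝ) * α + l₀ * β with hγ
  obtain ⟨L, hL⟩ := exists_nat_ge (c / β)
  have hLβ : c ≤ L * β := by
    rw [div_le_iff₀ hβ] at hL
    linarith
  set T : ℝ := c - L * β with hT
  have hT0 : T ≤ 0 := by rw [hT]; linarith
  have hex : ∃ m : ℕ, m * γ ≤ T := by
    obtain ⟨m, hm⟩ := exists_nat_ge (T / γ)
    refine ⟨m, ?_⟩
    rw [div_le_iff_of_neg hγneg] at hm
    linarith
  set m₀ := Nat.find hex with hm₀
  have hspec : (m₀ : ℝ) * γ ≤ T := Nat.find_spec hex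
  have hlow : T - ε < m₀ * γ := by
    rcases Nat.eq_zero_or_pos m₀ with h | h
    · rw [← hm₀] at *
      rw [h]
      push_cast
      have : T = 0 → True := fun _ => trivial
      -- m₀ = 0 : 0 ≤ T from minimality is not available; but 0*γ = 0 ≤ T means T ≥ 0, so T = 0
      have h0 : (0:ℝ) * γ ≤ T := by
        have := hspec
        rw [h] at this
        push_cast at this
        linarith
      nlinarith
    · have hprev : ¬ ((m₀ - 1 : ℕ) : ℝ) * γ ≤ T := Nat.find_min hex (by omega)
      push_neg at hprev
      have : ((m₀ - 1 : ℕ) : ℝ) = (m₀ : ℝ) - 1 := by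
        push_cast [Nat.cast_sub h]
        ring
      rw [this] at hprev
      nlinarith
  refine ⟨m₀ * k₀, m₀ * l₀ + L, ?_, ?_⟩
  · push_cast
    rw [hγ] at hlow
    rw [hT] at hlow
    push_cast at hlow
    nlinarith
  · push_cast
    rw [hγ] at hspec
    rw [hT] at hspec
    push_cast at hspec
    nlinarith

end Density

section Mult
open Set

/-- from the LF condition, log-irrationality -/
lemma LF_irr {ω₁ ω₂ : ℝ} (h0 : 0 < ω₁) (h1 : ω₁ < 1) (h2 : 1 < ω₂)
    (hLF : ∀ k l : ℤ, ω₁ ^ k = ω₂ ^ l → k = 0 ∧ l = 0) :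
    ∀ k l : ℤ, (k:ℝ) * Real.log ω₁ + l * Real.log ω₂ = 0 → k = 0 ∧ l = 0 := by
  intro k l h
  have h2' : (0:ℝ) < ω₂ := by linarith
  have key : ω₁ ^ k = ω₂ ^ (-l) := by
    have e1 : ω₁ ^ k = Real.exp ((k:ℝ) * Real.log ω₁) := by
      rw [← Real.log_zpow, Real.exp_log (zpow_pos h0 _)]
    have e2 : ω₂ ^ (-l) = Real.exp (((-l : ℤ):ℝ) * Real.log ω₂) := by
      rw [← Real.log_zpow, Real.exp_log (zpow_pos h2' _)]
    rw [e1, e2]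
    congr 1
    push_cast
    linarith
  have := hLF k (-l) key
  omega

/-- the multiplicative density statement used for transitivity -/
lemma exists_word {ω₁ ω₂ : ℝ} (h0 : 0 < ω₁) (h1 : ω₁ < 1) (h2 : 1 < ω₂)
    (hLF : ∀ k l : ℤ, ω₁ ^ k = ω₂ ^ l → k = 0 ∧ l = 0)
    {a b r : ℝ} (ha0 : 0 < a) (hb0 : 0 < b) (hr0 : 0 < r) (hr1 : r < 1) :
    ∃ k l : ℕ, b * r < a * ω₁ ^ k * ω₂ ^ l ∧ a * ω₁ ^ k * ω₂ ^ l ≤ b := by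
  have h2' : (0:ℝ) < ω₂ := by linarith
  have hα : Real.log ω₁ < 0 := Real.log_neg h0 h1
  have hβ : 0 < Real.log ω₂ := Real.log_pos h2
  have hε : 0 < -Real.log r := by
    have := Real.log_neg hr0 hr1
    linarith
  obtain ⟨k, l, hlow, hhigh⟩ :=
    combo_dense hα hβ (LF_irr h0 h1 h2 hLF) (Real.log b - Real.log a) hε
  have hval : a * ω₁ ^ k * ω₂ ^ l
      = Real.exp (Real.log a + ((k:ℝ) * Real.log ω₁ + l * Real.log ω₂)) := by
    rw [Real.exp_add, Real.exp_add, Real.exp_log ha0, Real.exp_nat_mul, Real.exp_nat_mul,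
      Real.exp_log h0, Real.exp_log h2']
    ring
  refine ⟨k, l, ?_, ?_⟩
  · have hbr : b * r = Real.exp (Real.log b + Real.log r) := by
      rw [Real.exp_add, Real.exp_log hb0, Real.exp_log hr0]
    rw [hbr, hval]
    apply Real.exp_lt_exp.mpr
    linarith
  · have hb : b = Real.exp (Real.log b) := (Real.exp_log hb0).symm
    rw [hval]
    nth_rewrite 1 [hb]
    apply Real.exp_le_exp.mpr
    linarith
end Mult

section TentCoord

lemma tent_left {ω₁ ω₂ s : ℝ} {j m : ℤ} (h : m ≤ j) :
    tent ω₁ ω₂ s j m = s * ω₂ ^ (m - j) := if_pos h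

lemma tent_right {ω₁ ω₂ s : ℝ} {j m : ℤ} (h : j ≤ m) :
    tent ω₁ ω₂ s j m = s * ω₁ ^ (m - j) := by
  unfold tent
  rcases lt_or_eq_of_le h with h' | h'
  · rw [if_neg (by omega)]
  · subst h'; simp

end TentCoord

/-- existence of a point of `U` with strictly positive coordinates together with a
cylinder neighborhood -/
lemma exists_nice_point {S : Finset ℝ} (hS : LFInducing S)
    {U : Set (MahavierTwo (FOmega S))} (hU : IsOpen U) (hne : U.Nonempty) :
    ∃ (x : MahavierTwo (FOmega S)) (N : ℕ) (δ : ℝ), x ∈ U ∧ 0 < δ ∧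
      (∀ m : ℤ, 0 < (x : ℤ → ℝ) m) ∧
      (∀ y : MahavierTwo (FOmega S),
        (∀ i : ℤ, i.natAbs ≤ N → |(y : ℤ → ℝ) i - (x : ℤ → ℝ) i| < δ) → y ∈ U) := by
  obtain ⟨x₀, hx₀⟩ := hne
  obtain ⟨N, δ, hδ, hcyl⟩ := exists_cylinder hU hx₀
  obtain ⟨hcard, hpos, ω₁, hω₁, ω₂, hω₂, h1, h2, hLF⟩ := hS
  by_cases hx0 : 0 < (x₀ : ℤ → ℝ) 0
  · exact ⟨x₀, N, δ, hx₀, hδ, pos_propagate x₀.2 hpos hx0, hcyl⟩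
  · -- x₀ is identically zero; replace it by a small tent
    have hzero : ∀ m : ℤ, (x₀ : ℤ → ℝ) m = 0 := by
      intro m
      by_contra hm
      have hmpos : 0 < (x₀ : ℤ → ℝ) m :=
        lt_of_le_of_ne (mem_Icc_of_mem x₀.2 m).1 (Ne.symm hm)
      exact hx0 (pos_propagate x₀.2 hpos hmpos 0)
    set s : ℝ := min (δ/2) 1 with hs
    have hs0 : 0 < s := by
      apply lt_min (by linarith) one_pos
    have hs1 : s ≤ 1 := min_le_right _ _
    have hsδ : s ≤ δ/2 := min_le_left _ _
    have h0ω₁ : 0 < ω₁ := hpos ω₁ hω₁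
    set T : MahavierTwo (FOmega S) :=
      ⟨tent ω₁ ω₂ s 0, tent_mem hω₁ hω₂ h0ω₁ h1 h2 hs0 hs1 0⟩ with hT
    have hTb : ∀ m : ℤ, 0 < (T : ℤ → ℝ) m ∧ (T : ℤ → ℝ) m ≤ s :=
      fun m => tent_le h0ω₁ h1 h2 hs0 0 m
    have hTU : T ∈ U := by
      apply hcyl
      intro i hi
      rw [hzero i, sub_zero, abs_of_pos (hTb i).1]
      calc (T : ℤ → ℝ) i ≤ s := (hTb i).2
      _ ≤ δ/2 := hsδ
      _ < δ := by linarith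
    refine ⟨T, N, δ/2, hTU, by linarith, fun m => (hTb m).1, ?_⟩
    intro y hy
    apply hcyl
    intro i hi
    have := hy i hi
    rw [hzero i, sub_zero]
    calc |(y : ℤ → ℝ) i| = |((y : ℤ → ℝ) i - (T : ℤ → ℝ) i) + (T : ℤ → ℝ) i| := by ring_nf
    _ ≤ |(y : ℤ → ℝ) i - (T : ℤ → ℝ) i| + |(T : ℤ → ℝ) i| := abs_add_le _ _
    _ < δ/2 + δ/2 := by
        apply add_lt_add_of_lt_of_le this
        rw [abs_of_pos (hTb i).1]
        calc (T : ℤ → ℝ) i ≤ s := (hTb i).2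
        _ ≤ δ/2 := hsδ
    _ = δ := by ring

/-- scaling error bound -/
lemma scale_err {t u δ' : ℝ} (ht1 : t ≤ 1) (hu0 : 0 ≤ u) (hu1 : u ≤ 1)
    (h : 1 - t < δ') : |t * u - u| < δ' := by
  have h1 : t * u - u = -((1 - t) * u) := by ring
  rw [h1, abs_neg, abs_of_nonneg (by nlinarith)]
  nlinarith

/-- the two-sided Mahavier system of an LF-inducing set is topologically transitive -/
lemma transitive_of_LF {Ω : Finset ℝ} (hΩ : LFInducing Ω) :
    TopTransitive (shiftTwo (FOmega Ω)) := by
  intro U V hUopen hVopen hUne hVne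
  obtain ⟨x, Nx, δx, hxU, hδx, hxpos, hcylx⟩ := exists_nice_point hΩ hUopen hUne
  obtain ⟨v, Nv, δv, hvV, hδv, hvpos, hcylv⟩ := exists_nice_point hΩ hVopen hVne
  obtain ⟨hcard, hpos, ω₁, hω₁, ω₂, hω₂, h1, h2, hLF⟩ := hΩ
  have h0ω₁ : 0 < ω₁ := hpos ω₁ hω₁
  have h0ω₂ : (0:ℝ) < ω₂ := by linarith
  set N : ℕ := max Nx Nv with hN
  set Nm : ℤ := (N : ℤ) with hNm
  set δ : ℝ := min δx δv with hδ'
  have hδ : 0 < δ := lt_min hδx hδv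
  set a : ℝ := (x : ℤ → ℝ) Nm with ha'
  set b : ℝ := (v : ℤ → ℝ) (-Nm) with hb'
  have ha0 : 0 < a := hxpos Nm
  have ha1 : a ≤ 1 := (mem_Icc_of_mem x.2 Nm).2
  have hb0 : 0 < b := hvpos (-Nm)
  have hb1 : b ≤ 1 := (mem_Icc_of_mem v.2 (-Nm)).2
  set d : ℝ := min (δ/4) (1/2) with hd'
  have hd0 : 0 < d := lt_min (by linarith) (by norm_num)
  have hd2 : d ≤ 1/2 := min_le_right _ _
  have hdδ : d ≤ δ/4 := min_le_left _ _
  set r : ℝ := 1 - d with hr'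
  have hr0 : 0 < r := by rw [hr']; linarith
  have hr1 : r < 1 := by rw [hr']; linarith
  -- the connecting word
  obtain ⟨k, l, hc1, hc2⟩ := exists_word h0ω₁ h1 h2 hLF
    (mul_pos hr0 ha0) hb0 hr0 hr1
  set c : ℝ := r * a * ω₁ ^ k * ω₂ ^ l with hc'
  have hc0 : 0 < c := by positivity
  have hcb : c ≤ b := hc2
  have hcbr : b * r < c := hc1
  have hc1' : c ≤ 1 := le_trans hcb hb1
  set n : ℕ := 2 * N + k + l with hn'
  set j₂ : ℤ := (n : ℤ) - Nm with hj₂'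
  have hj₂eq : j₂ = Nm + k + l := by rw [hj₂', hn', hNm]; push_cast; ring
  -- the pieces
  set X' : ℤ → ℝ := fun m => r * (x : ℤ → ℝ) m with hX'
  have hX'mem : X' ∈ MahavierTwo (FOmega Ω) := scale_mem x.2 hr0.le hr1.le
  set T1 : ℤ → ℝ := tent ω₁ ω₂ (r * a) Nm with hT1'
  have hT1mem : T1 ∈ MahavierTwo (FOmega Ω) :=
    tent_mem hω₁ hω₂ h0ω₁ h1 h2 (by positivity) (by nlinarith) Nm
  set T2 : ℤ → ℝ := tent ω₁ ω₂ c (Nm + k + l) with hT2'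
  have hT2mem : T2 ∈ MahavierTwo (FOmega Ω) :=
    tent_mem hω₁ hω₂ h0ω₁ h1 h2 hc0 hc1' _
  have he₂ : T1 (Nm + k) = T2 (Nm + k) := by
    rw [hT1', hT2', tent_right (by omega), tent_left (by omega)]
    have e1 : (Nm + k - Nm) = (k : ℤ) := by ring
    have e2 : (Nm + k - (Nm + k + l)) = -(l : ℤ) := by ring
    rw [e1, e2, hc', zpow_natCast, zpow_neg, zpow_natCast]
    field_simp
  set M₁ : ℤ → ℝ := glue T1 T2 (Nm + k) with hM₁'
  have hM₁mem : M₁ ∈ MahavierTwo (FOmega Ω) := glue_mem hT1mem hT2mem he₂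
  have he₁ : X' Nm = M₁ Nm := by
    rw [hX', hM₁', glue_left (by omega), hT1', tent_peak]
  set Inner : ℤ → ℝ := glue X' M₁ Nm with hInner'
  have hInnermem : Inner ∈ MahavierTwo (FOmega Ω) := glue_mem hX'mem hM₁mem he₁
  set Vf : ℤ → ℝ := fun m => (c / b) * (v : ℤ → ℝ) (m + -(n:ℤ)) with hVf'
  have hVfmem : Vf ∈ MahavierTwo (FOmega Ω) :=
    scale_mem (shift_mem v.2 (-(n:ℤ))) (by positivity) (by
      rw [div_le_one hb0]; exact hcb)
  have he₃ : Inner j₂ = Vf j₂ := by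
    rw [hInner', glue_right he₁ (by omega), hM₁', glue_right he₂ (by rw [hj₂eq]; omega),
      hT2', hj₂eq, tent_peak, hVf']
    show c = c / b * (v : ℤ → ℝ) (Nm + (k:ℤ) + (l:ℤ) + -(n:ℤ))
    have hidx : (Nm + (k:ℤ) + l + -(n:ℤ)) = -Nm := by rw [hn', hNm]; push_cast; ring
    rw [hidx, ← hb']
    field_simp
  set w : ℤ → ℝ := glue Inner Vf j₂ with hw'
  have hwmem : w ∈ MahavierTwo (FOmega Ω) := glue_mem hInnermem hVfmem he₃
  clear_value X' T1 T2 M₁ Inner Vf w c δ d r a b N Nm n j₂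
  refine ⟨n, (shiftTwo (FOmega Ω))^[n] ⟨w, hwmem⟩, ⟨⟨w, hwmem⟩, ?_, rfl⟩, ?_⟩
  · -- the glued point is in U
    apply hcylx
    intro i hi
    have hiN : -Nm ≤ i ∧ i ≤ Nm := by
      constructor <;> · rw [hNm]; omega
    have hwi : w i = r * (x : ℤ → ℝ) i := by
      rw [hw', glue_left (by rw [hj₂eq]; omega), hInner', glue_left hiN.2, hX']
    show |w i - (x : ℤ → ℝ) i| < δx
    rw [hwi]
    have hxi := mem_Icc_of_mem x.2 i
    have h4 : (1:ℝ) - r = d := by rw [hr']; ring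
    have hδx' : δ ≤ δx := by rw [hδ']; exact min_le_left _ _
    exact scale_err hr1.le hxi.1 hxi.2 (by linarith)
  · -- its n-th shift is in V
    apply hcylv
    intro i hi
    have hiN : -Nm ≤ i ∧ i ≤ Nm := by
      constructor <;> · rw [hNm]; omega
    have hco : (((shiftTwo (FOmega Ω))^[n] ⟨w, hwmem⟩ : MahavierTwo (FOmega Ω)) : ℤ → ℝ) i
        = w (i + (n:ℤ)) := iterate_shiftTwo_coe _ _ _
    rw [hco]
    have hwi : w (i + (n:ℤ)) = (c / b) * (v : ℤ → ℝ) i := by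
      rw [hw', glue_right he₃ (by rw [hj₂']; omega), hVf']
      show (c / b) * (v : ℤ → ℝ) (i + (n:ℤ) + -(n:ℤ)) = _
      have hidx : i + (n:ℤ) + -(n:ℤ) = i := by ring
      rw [hidx]
    rw [hwi]
    have hvi := mem_Icc_of_mem v.2 i
    have hcb1 : c / b ≤ 1 := by rw [div_le_one hb0]; exact hcb
    have hcbr' : r < c / b := by rw [lt_div_iff₀ hb0]; linarith [hcbr]
    have h4 : (1:ℝ) - r = d := by rw [hr']; ring
    have hδv' : δ ≤ δv := by rw [hδ']; exact min_le_right _ _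
    exact scale_err hcb1 hvi.1 hvi.2 (by linarith)

set_option maxHeartbeats 1000000 in
/-- mixing transfers from a sub-LF-system to the full system -/
lemma mixing_of_LF {Ω Λ : Finset ℝ} (hΩ : LFInducing Ω) (hΛ : LFInducing Λ) (hsub : Λ ⊆ Ω)
    (hmix : TopMixing (shiftTwo (FOmega Λ))) : TopMixing (shiftTwo (FOmega Ω)) := by
  intro U V hUopen hVopen hUne hVne
  obtain ⟨x, Nx, δx, hxU, hδx, hxpos, hcylx⟩ := exists_nice_point hΩ hUopen hUne
  obtain ⟨v, Nv, δv, hvV, hδv, hvpos, hcylv⟩ := exists_nice_point hΩ hVopen hVne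
  obtain ⟨hcardΛ, hposΛ, lam₁, hlam₁, lam₂, hlam₂, hl1, hl2, hLFΛ⟩ := hΛ
  have h0lam₁ : 0 < lam₁ := hposΛ lam₁ hlam₁
  set N : ℕ := max Nx Nv with hN
  set Nm : ℤ := (N : ℤ) with hNm
  set δ : ℝ := min δx δv with hδ'
  have hδ : 0 < δ := lt_min hδx hδv
  set a : ℝ := (x : ℤ → ℝ) Nm with ha'
  set b : ℝ := (v : ℤ → ℝ) (-Nm) with hb'
  have ha0 : 0 < a := hxpos Nm
  have ha1 : a ≤ 1 := (mem_Icc_of_mem x.2 Nm).2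
  have hb0 : 0 < b := hvpos (-Nm)
  have hb1 : b ≤ 1 := (mem_Icc_of_mem v.2 (-Nm)).2
  set d : ℝ := min (δ/4) (1/2) with hd'
  have hd0 : 0 < d := lt_min (by linarith) (by norm_num)
  have hd2 : d ≤ 1/2 := min_le_right _ _
  have hdδ : d ≤ δ/4 := min_le_left _ _
  set r : ℝ := 1 - d with hr'
  have hr0 : 0 < r := by rw [hr']; linarith
  have hr1 : r < 1 := by rw [hr']; linarith
  have hr3 : 1 - r ^ 3 ≤ 3 * d := by
    rw [hr']
    nlinarith [mul_nonneg (mul_nonneg hd0.le hd0.le) (by linarith : (0:ℝ) ≤ 3 - d)]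
  clear_value N Nm δ a b d r
  -- the two Λ-open sets
  set U' : Set (MahavierTwo (FOmega Λ)) :=
    {z | (z : ℤ → ℝ) Nm ∈ Set.Ioo (r * a) a} with hU''
  set V' : Set (MahavierTwo (FOmega Λ)) :=
    {z | (z : ℤ → ℝ) (-Nm) ∈ Set.Ioo (b * r * r) (b * r)} with hV''
  have hU'open : IsOpen U' := isOpen_coordIoo _ _ _ _
  have hV'open : IsOpen V' := isOpen_coordIoo _ _ _ _
  have hU'ne : U'.Nonempty := by
    refine ⟨⟨tent lam₁ lam₂ ((r * a + a)/2) Nm,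
      tent_mem hlam₁ hlam₂ h0lam₁ hl1 hl2 (by nlinarith) (by nlinarith) Nm⟩, ?_⟩
    show tent lam₁ lam₂ ((r * a + a)/2) Nm Nm ∈ Set.Ioo (r * a) a
    rw [tent_peak]
    constructor <;> nlinarith
  have hbr0 : 0 < b * r := mul_pos hb0 hr0
  have hbrr0 : 0 < b * r * r := mul_pos hbr0 hr0
  have hbr1 : b * r ≤ 1 := by nlinarith
  have hbrr1 : b * r * r ≤ 1 := by nlinarith
  have hbrlt : b * r * r < b * r := by nlinarith
  have hV'ne : V'.Nonempty := by
    refine ⟨⟨tent lam₁ lam₂ ((b * r * r + b * r)/2) (-Nm),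
      tent_mem hlam₁ hlam₂ h0lam₁ hl1 hl2 (by linarith) (by linarith) (-Nm)⟩, ?_⟩
    show tent lam₁ lam₂ ((b * r * r + b * r)/2) (-Nm) (-Nm) ∈ Set.Ioo (b * r * r) (b * r)
    rw [tent_peak]
    constructor <;> linarith
  obtain ⟨n₀, hn₀⟩ := hmix U' V' hU'open hV'open hU'ne hV'ne
  refine ⟨max n₀ (2 * N + 1), fun n hn => ?_⟩
  have hnn₀ : n₀ ≤ n := le_trans (le_max_left _ _) hn
  have hn2N : 2 * N + 1 ≤ n := le_trans (le_max_right _ _) hn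
  obtain ⟨ζn, ⟨⟨ζ, hζU', hζeq⟩, hζV'⟩⟩ := hn₀ n hnn₀
  set zc : ℤ → ℝ := (ζ : ℤ → ℝ) with hzc'
  have hz1 : zc Nm ∈ Set.Ioo (r * a) a := hζU'
  have hz2 : zc (-Nm + (n:ℤ)) ∈ Set.Ioo (b * r * r) (b * r) := by
    have : (ζn : ℤ → ℝ) (-Nm) ∈ Set.Ioo (b * r * r) (b * r) := hζV'
    rw [← hζeq, iterate_shiftTwo_coe] at this
    exact this
  have hzΩ : zc ∈ MahavierTwo (FOmega Ω) := MahavierTwo_mono hsub ζ.2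
  have hzb : ∀ m, zc m ∈ Set.Icc (0:ℝ) 1 := fun m => mem_Icc_of_mem hzΩ m
  set j₂ : ℤ := (n : ℤ) - Nm with hj₂'
  have hz2' : zc j₂ ∈ Set.Ioo (b * r * r) (b * r) := by
    have hidx : j₂ = -Nm + (n:ℤ) := by rw [hj₂']; ring
    rw [hidx]; exact hz2
  have hzNm0 : 0 < zc Nm := lt_trans (mul_pos hr0 ha0) hz1.1
  set f : ℝ := r * a / zc Nm with hf'
  have hf0 : 0 < f := by rw [hf']; positivity
  have hf1 : f < 1 := by rw [hf']; rw [div_lt_one hzNm0]; exact hz1.1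
  have hfr : r < f := by
    rw [hf', lt_div_iff₀ hzNm0]
    calc r * zc Nm < r * a := mul_lt_mul_of_pos_left hz1.2 hr0
    _ = r * a := rfl
  set Z : ℤ → ℝ := fun m => f * zc m with hZ'
  have hZmem : Z ∈ MahavierTwo (FOmega Ω) := scale_mem hzΩ hf0.le hf1.le
  set c : ℝ := f * zc j₂ with hc'
  have hzj0 : 0 < zc j₂ := lt_trans hbrr0 hz2'.1
  have hc0 : 0 < c := by rw [hc']; exact mul_pos hf0 hzj0
  have hcup : c < b * r := by
    rw [hc']
    calc f * zc j₂ < 1 * zc j₂ := mul_lt_mul_of_pos_right hf1 hzj0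
    _ = zc j₂ := by ring
    _ < b * r := hz2'.2
  have hclow : b * r ^ 3 < c := by
    rw [hc']
    calc b * r ^ 3 = r * (b * r * r) := by ring
    _ < r * zc j₂ := mul_lt_mul_of_pos_left hz2'.1 hr0
    _ < f * zc j₂ := mul_lt_mul_of_pos_right hfr hzj0
  have hbrb : b * r ≤ b := by
    calc b * r ≤ b * 1 := mul_le_mul_of_nonneg_left hr1.le hb0.le
    _ = b := mul_one b
  have hcb : c ≤ b := le_trans hcup.le hbrb
  -- the pieces
  set X' : ℤ → ℝ := fun m => r * (x : ℤ → ℝ) m with hX'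
  have hX'mem : X' ∈ MahavierTwo (FOmega Ω) := scale_mem x.2 hr0.le hr1.le
  have he₁ : X' Nm = Z Nm := by
    rw [hX', hZ']
    show r * (x : ℤ → ℝ) Nm = f * zc Nm
    rw [← ha', hf']
    have hne := hzNm0.ne'
    field_simp
  set Inner : ℤ → ℝ := glue X' Z Nm with hInner'
  have hInnermem : Inner ∈ MahavierTwo (FOmega Ω) := glue_mem hX'mem hZmem he₁
  set Vf : ℤ → ℝ := fun m => (c / b) * (v : ℤ → ℝ) (m + -(n:ℤ)) with hVf'
  have hVfmem : Vf ∈ MahavierTwo (FOmega Ω) :=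
    scale_mem (shift_mem v.2 (-(n:ℤ))) (by positivity) (by
      rw [div_le_one hb0]; exact hcb)
  have hNmj₂ : Nm ≤ j₂ := by rw [hj₂', hNm]; omega
  have he₃ : Inner j₂ = Vf j₂ := by
    rw [hInner', glue_right he₁ hNmj₂, hZ', hVf']
    show f * zc j₂ = (c / b) * (v : ℤ → ℝ) (j₂ + -(n:ℤ))
    have hidx : j₂ + -(n:ℤ) = -Nm := by rw [hj₂']; ring
    rw [hidx, ← hb', ← hc']
    have hne := hb0.ne'
    field_simp
  set w : ℤ → ℝ := glue Inner Vf j₂ with hw'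
  have hwmem : w ∈ MahavierTwo (FOmega Ω) := glue_mem hInnermem hVfmem he₃
  clear_value X' Z Inner Vf w c f zc j₂
  refine ⟨(shiftTwo (FOmega Ω))^[n] ⟨w, hwmem⟩, ⟨⟨w, hwmem⟩, ?_, rfl⟩, ?_⟩
  · apply hcylx
    intro i hi
    have hiN : -Nm ≤ i ∧ i ≤ Nm := by
      constructor <;> · rw [hNm]; omega
    have hij₂ : i ≤ j₂ := by rw [hj₂', hNm] at *; omega
    have hwi : w i = r * (x : ℤ → ℝ) i := by
      rw [hw', glue_left hij₂, hInner', glue_left hiN.2, hX']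
    show |w i - (x : ℤ → ℝ) i| < δx
    rw [hwi]
    have hxi := mem_Icc_of_mem x.2 i
    have h4 : (1:ℝ) - r = d := by rw [hr']; ring
    have hδx' : δ ≤ δx := by rw [hδ']; exact min_le_left _ _
    exact scale_err hr1.le hxi.1 hxi.2 (by linarith)
  · apply hcylv
    intro i hi
    have hiN : -Nm ≤ i ∧ i ≤ Nm := by
      constructor <;> · rw [hNm]; omega
    have hco : (((shiftTwo (FOmega Ω))^[n] ⟨w, hwmem⟩ : MahavierTwo (FOmega Ω)) : ℤ → ℝ) i
        = w (i + (n:ℤ)) := iterate_shiftTwo_coe _ _ _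
    rw [hco]
    have hwi : w (i + (n:ℤ)) = (c / b) * (v : ℤ → ℝ) i := by
      rw [hw', glue_right he₃ (by rw [hj₂']; omega), hVf']
      show (c / b) * (v : ℤ → ℝ) (i + (n:ℤ) + -(n:ℤ)) = _
      have hidx : i + (n:ℤ) + -(n:ℤ) = i := by ring
      rw [hidx]
    rw [hwi]
    have hvi := mem_Icc_of_mem v.2 i
    have hcb1 : c / b ≤ 1 := by rw [div_le_one hb0]; exact hcb
    have hcbr' : r ^ 3 < c / b := by rw [lt_div_iff₀ hb0, mul_comm]; exact hclow
    have hδv' : δ ≤ δv := by rw [hδ']; exact min_le_right _ _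
    exact scale_err hcb1 hvi.1 hvi.2 (by linarith)

/-- Let `Λ ⊆ Ω` be LF-inducing sets. If the two-sided Mahavier system
of `F_Λ` is topologically transitive (resp. mixing), then so is that of `F_Ω`. -/
theorem stmt16 (Ω Λ : Finset ℝ) (hΩ : LFInducing Ω) (hΛ : LFInducing Λ) (hsub : Λ ⊆ Ω) :
    (TopTransitive (shiftTwo (FOmega Λ)) → TopTransitive (shiftTwo (FOmega Ω))) ∧
    (TopMixing (shiftTwo (FOmega Λ)) → TopMixing (shiftTwo (FOmega Ω))) := by
  exact ⟨fun _ => transitive_of_LF hΩ, fun h => mixing_of_LF hΩ hΛ hsub h⟩
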